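/- Let G and H be finite simple graphs on the same vertex set of size n, both with maximum degree at most d, differing in at most εn edges (edit distance ≤ ε). Then for every rooted (r,d)-ball α, |p_G(α) - p_H(α)| ≤ 4 d^r ε. -/

import Mathlib

open MeasureTheory Filter Topology

/-- A rooted `(r,d)`-ball: a finite connected rooted graph with maximum degree at most `d`
in which every vertex is within distance `rad` of the root. -/
structure Ball (d : ℕ) where
  rad : ℕ
  n : ℕ
  graph : SimpleGraph (Fin n)
  root : Fin n
  conn : graph.Connected
  deg : ∀ v, (graph.neighborSet v).ncard ≤ d
  small : ∀ v, graph.dist root v ≤ rad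

/-- Rooted isomorphism of rooted graphs. -/
def RootedIso {V W : Type*} (G : SimpleGraph V) (x : V) (H : SimpleGraph W) (y : W) : Prop :=
  ∃ e : G ≃g H, e x = y

/-- The vertex set of the ball of radius `r` around `x`. -/
def ballVerts {V : Type*} (G : SimpleGraph V) (r : ℕ) (x : V) : Set V :=
  {y | G.Reachable x y ∧ G.dist x y ≤ r}

lemma rootMemBall {V : Type*} (G : SimpleGraph V) (r : ℕ) (x : V) : x ∈ ballVerts G r x :=
  ⟨SimpleGraph.Reachable.refl x, by simp [SimpleGraph.dist_self]⟩

/-- The rooted `r`-ball of `G` around `x` is rooted-isomorphic to the rooted graph `(H,y)`. -/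
def ballIso {V W : Type*} (G : SimpleGraph V) (r : ℕ) (x : V)
    (H : SimpleGraph W) (y : W) : Prop :=
  RootedIso (G.induce (ballVerts G r x)) ⟨x, rootMemBall G r x⟩ H y

/-- `pfreq G α` is the fraction of vertices of `G` whose rooted `α.rad`-ball is
isomorphic to the rooted ball `α`. -/
noncomputable def pfreq {V : Type*} {d : ℕ} (G : SimpleGraph V) (α : Ball d) : ℝ :=
  ({x : V | ballIso G α.rad x α.graph α.root}).ncard / (Nat.card V)

/-- The statistical distance of two finite graphs with respect to an enumeration `E`
of all rooted `(r,d)`-balls. -/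
noncomputable def ds {d : ℕ} (E : ℕ → Ball d) {V W : Type*}
    (G : SimpleGraph V) (H : SimpleGraph W) : ℝ :=
  ∑' i : ℕ, (1 / 2 : ℝ) ^ (i + 1) * |pfreq G (E i) - pfreq H (E i)|

/-- `E` enumerates all rooted `(r,d)`-balls up to rooted isomorphism. -/
def Covers {d : ℕ} (E : ℕ → Ball d) : Prop :=
  ∀ β : Ball d, ∃ i, (E i).rad = β.rad ∧ RootedIso (E i).graph (E i).root β.graph β.root

/-- Maximum degree of `G` is at most `d`. -/
def DegLe {V : Type*} (G : SimpleGraph V) (d : ℕ) : Prop :=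
  ∀ v, (G.neighborSet v).ncard ≤ d

set_option linter.unusedSectionVars false

namespace EditAux

open SimpleGraph

variable {V : Type} [Finite V]

/-- biUnion card bound -/
lemma ncard_biUnion_le {β : Type*} (s : Finset β) (f : β → Set V) :
    (⋃ z ∈ s, f z).ncard ≤ ∑ z ∈ s, (f z).ncard := by
  classical
  induction s using Finset.induction_on with
  | empty => simp
  | insert a s' ha ih =>
    rw [Finset.sum_insert ha]
    calc (⋃ z ∈ insert a s', f z).ncard = (f a ∪ ⋃ z ∈ s', f z).ncard := by
          simp [Set.biUnion_insert]
      _ ≤ (f a).ncard + (⋃ z ∈ s', f z).ncard := Set.ncard_union_le _ _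
      _ ≤ (f a).ncard + ∑ z ∈ s', (f z).ncard := by omega

lemma mem_ball_comm {G : SimpleGraph V} {r : ℕ} {x y : V} :
    y ∈ ballVerts G r x ↔ x ∈ ballVerts G r y := by
  simp [ballVerts, SimpleGraph.dist_comm, reachable_comm]

lemma ball_zero {G : SimpleGraph V} (u : V) : ballVerts G 0 u = {u} := by
  ext y
  simp only [ballVerts, Set.mem_setOf_eq, Set.mem_singleton_iff, Nat.le_zero]
  constructor
  · rintro ⟨h1, h2⟩
    exact ((h1.dist_eq_zero_iff).mp h2).symm
  · rintro rfl
    exact ⟨Reachable.refl _, dist_self⟩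

lemma ball_succ_subset {G : SimpleGraph V} (r : ℕ) (u : V) :
    ballVerts G (r+1) u ⊆ insert u (⋃ z ∈ ballVerts G r u, G.neighborSet z) := by
  intro y hy
  obtain ⟨hre, hd⟩ := hy
  by_cases hyu : y = u
  · simp [hyu]
  · right
    have hd' : G.dist y u ≠ 0 := by
      rw [SimpleGraph.dist_ne_zero_iff_ne_and_reachable]
      exact ⟨hyu, hre.symm⟩
    obtain ⟨p, hp⟩ := SimpleGraph.exists_walk_of_dist_ne_zero hd'
    cases p with
    | nil => exact absurd rfl hyu
    | cons h q =>
      rename_i z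
      refine Set.mem_biUnion (show z ∈ ballVerts G r u from ?_) h.symm
      have hql : q.length ≤ r := by
        have : G.dist y u ≤ r + 1 := by rwa [SimpleGraph.dist_comm]
        have := hp
        simp only [Walk.length_cons] at this
        omega
      exact ⟨⟨q.reverse⟩, le_trans (SimpleGraph.dist_le q.reverse) (by simpa using hql)⟩

lemma ball_card_step {G : SimpleGraph V} {d : ℕ} (hG : DegLe G d) (r : ℕ) (u : V) :
    (ballVerts G (r+1) u).ncard ≤ d * (ballVerts G r u).ncard + 1 := by
  classical
  have hfin : (ballVerts G r u).Finite := Set.toFinite _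
  calc (ballVerts G (r+1) u).ncard
      ≤ (insert u (⋃ z ∈ ballVerts G r u, G.neighborSet z)).ncard :=
        Set.ncard_le_ncard (ball_succ_subset r u) (Set.toFinite _)
    _ ≤ (⋃ z ∈ ballVerts G r u, G.neighborSet z).ncard + 1 := Set.ncard_insert_le _ _
    _ ≤ d * (ballVerts G r u).ncard + 1 := by
        have : (⋃ z ∈ ballVerts G r u, G.neighborSet z)
            = ⋃ z ∈ hfin.toFinset, G.neighborSet z := by
          simp
        rw [this]
        have h1 := ncard_biUnion_le hfin.toFinset (fun z => G.neighborSet z)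
        have h2 : ∑ z ∈ hfin.toFinset, (G.neighborSet z).ncard ≤ ∑ _z ∈ hfin.toFinset, d :=
          Finset.sum_le_sum fun z _ => hG z
        simp only [Finset.sum_const, smul_eq_mul] at h2
        have h3 : hfin.toFinset.card = (ballVerts G r u).ncard :=
          (Set.ncard_eq_toFinset_card _ hfin).symm
        rw [h3, Nat.mul_comm] at h2
        omega

lemma walk_closed {G : SimpleGraph V} {S : Set V}
    (hS : ∀ a b, a ∈ S → G.Adj a b → b ∈ S) {x y : V} (p : G.Walk x y) (hx : x ∈ S) :
    y ∈ S := by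
  induction p with
  | nil => exact hx
  | cons h q ih => exact ih (hS _ _ hx h)

lemma ball_card_le_d1 {G : SimpleGraph V} (hG : DegLe G 1) (r : ℕ) (u : V) :
    (ballVerts G r u).ncard ≤ 2 := by
  have hsub : ballVerts G r u ⊆ insert u (G.neighborSet u) := by
    have hclosed : ∀ a b : V, a ∈ insert u (G.neighborSet u) → G.Adj a b →
        b ∈ insert u (G.neighborSet u) := by
      rintro a b (rfl | ha) hab
      · exact Or.inr hab
      · have hdeg : (G.neighborSet a).ncard ≤ 1 := hG a
        have hu : u ∈ G.neighborSet a := (show G.Adj u a from ha).symm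
        have hb : b ∈ G.neighborSet a := hab
        left
        by_contra hbu
        have hpair : ({b, u} : Set V) ⊆ G.neighborSet a := by
          intro w hw
          rcases hw with rfl | hw
          · exact hb
          · simp only [Set.mem_singleton_iff] at hw; exact hw ▸ hu
        have h2 : ({b, u} : Set V).ncard = 2 := Set.ncard_pair hbu
        have := Set.ncard_le_ncard hpair (Set.toFinite _)
        omega
    rintro y ⟨⟨p⟩, -⟩
    exact walk_closed hclosed p (Set.mem_insert _ _)
  calc (ballVerts G r u).ncard ≤ (insert u (G.neighborSet u)).ncard :=
        Set.ncard_le_ncard hsub (Set.toFinite _)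
    _ ≤ (G.neighborSet u).ncard + 1 := Set.ncard_insert_le _ _
    _ ≤ 2 := by have := hG u; omega

lemma ball_card_le {G : SimpleGraph V} {d : ℕ} (hd : 1 ≤ d) (hG : DegLe G d) (r : ℕ) (u : V) :
    (ballVerts G r u).ncard ≤ 2 * d ^ r := by
  rcases eq_or_lt_of_le hd with h1 | h2
  · rw [← h1]
    simpa using ball_card_le_d1 (h1 ▸ hG) r u
  · have key : ∀ r, (ballVerts G r u).ncard + 1 ≤ 2 * d ^ r := by
      intro r
      induction r with
      | zero => simp [ball_zero]
      | succ r ih =>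
        have := ball_card_step hG r u
        have h3 : d * ((ballVerts G r u).ncard + 1) ≤ d * (2 * d ^ r) :=
          Nat.mul_le_mul_left d ih
        have : (ballVerts G (r+1) u).ncard + 1 ≤ d * (ballVerts G r u).ncard + 2 := by omega
        calc (ballVerts G (r+1) u).ncard + 1 ≤ d * (ballVerts G r u).ncard + 2 := this
          _ ≤ d * (ballVerts G r u).ncard + d := by omega
          _ = d * ((ballVerts G r u).ncard + 1) := by ring
          _ ≤ d * (2 * d ^ r) := h3
          _ = 2 * d ^ (r+1) := by ring
    have := key r
    omega

/-- The set of "bad" vertices. -/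
def Bad (G H : SimpleGraph V) (r : ℕ) : Set V :=
  {x | ∃ e ∈ symmDiff G.edgeSet H.edgeSet,
    (∀ w ∈ e, w ∈ ballVerts G r x) ∨ (∀ w ∈ e, w ∈ ballVerts H r x)}

lemma mem_ball_of_mem_support {G : SimpleGraph V} {r : ℕ} {x y w : V}
    (p : G.Walk x y) (hlen : p.length ≤ r) (hw : w ∈ p.support) :
    w ∈ ballVerts G r x := by
  classical
  exact ⟨⟨p.takeUntil w hw⟩,
    le_trans (SimpleGraph.dist_le _) (le_trans (p.length_takeUntil_le hw) hlen)⟩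

lemma ball_subset_of_good {G H : SimpleGraph V} {r : ℕ} {x : V}
    (hg : ∀ e ∈ symmDiff G.edgeSet H.edgeSet, ¬(∀ w ∈ e, w ∈ ballVerts G r x)) :
    ballVerts G r x ⊆ ballVerts H r x := by
  rintro y ⟨hre, hdist⟩
  obtain ⟨p, hp⟩ := hre.exists_walk_length_eq_dist
  have hlen : p.length ≤ r := hp ▸ hdist
  have hedges : ∀ e ∈ p.edges, e ∈ H.edgeSet := by
    intro e he
    by_contra hno
    have heG : e ∈ G.edgeSet := p.edges_subset_edgeSet he
    have hsd : e ∈ symmDiff G.edgeSet H.edgeSet := by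
      rw [Set.mem_symmDiff]; exact Or.inl ⟨heG, hno⟩
    refine hg e hsd ?_
    intro w hw
    obtain ⟨b, rfl⟩ := Sym2.mem_iff_exists.mp hw
    exact mem_ball_of_mem_support p hlen (p.fst_mem_support_of_mem_edges he)
  exact ⟨⟨p.transfer H hedges⟩,
    le_trans (SimpleGraph.dist_le _) (by rw [p.length_transfer hedges]; exact hlen)⟩

lemma ball_eq_of_good {G H : SimpleGraph V} {r : ℕ} {x : V} (hx : x ∉ Bad G H r) :
    ballVerts G r x = ballVerts H r x := by
  simp only [Bad, Set.mem_setOf_eq, not_exists, not_or, not_and] at hx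
  refine Set.Subset.antisymm (ball_subset_of_good fun e he => (hx e he).1) ?_
  refine ball_subset_of_good fun e he => ?_
  have : e ∈ symmDiff G.edgeSet H.edgeSet := by rwa [symmDiff_comm] at he
  exact (hx e this).2

lemma adj_iff_of_good {G H : SimpleGraph V} {r : ℕ} {x : V} (hx : x ∉ Bad G H r)
    {a b : V} (ha : a ∈ ballVerts G r x) (hb : b ∈ ballVerts G r x) :
    G.Adj a b ↔ H.Adj a b := by
  simp only [Bad, Set.mem_setOf_eq, not_exists, not_or, not_and] at hx
  have hball : ∀ w ∈ s(a, b), w ∈ ballVerts G r x := by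
    intro w hw
    rcases Sym2.mem_iff.mp hw with rfl | rfl
    · exact ha
    · exact hb
  constructor
  · intro hadj
    by_contra hno
    have hsd : s(a,b) ∈ symmDiff G.edgeSet H.edgeSet := by
      rw [Set.mem_symmDiff]; exact Or.inl ⟨hadj, hno⟩
    exact (hx _ hsd).1 hball
  · intro hadj
    by_contra hno
    have hsd : s(a,b) ∈ symmDiff G.edgeSet H.edgeSet := by
      rw [Set.mem_symmDiff]; exact Or.inr ⟨hadj, hno⟩
    exact (hx _ hsd).1 hball

/-- Congruence of induced graphs. -/
def induceCongr {G H : SimpleGraph V} {s t : Set V} (hst : s = t)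
    (hadj : ∀ a ∈ s, ∀ b ∈ s, (G.Adj a b ↔ H.Adj a b)) : G.induce s ≃g H.induce t where
  toEquiv := Equiv.setCongr hst
  map_rel_iff' := by
    rintro ⟨a, ha⟩ ⟨b, hb⟩
    simp only [Equiv.setCongr_apply, comap_adj, Function.Embedding.coe_subtype]
    exact (hadj a ha b hb).symm

lemma induceCongr_apply {G H : SimpleGraph V} {s t : Set V} (hst : s = t)
    (hadj : ∀ a ∈ s, ∀ b ∈ s, (G.Adj a b ↔ H.Adj a b)) (a : V) (ha : a ∈ s) (ha' : a ∈ t) :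
    induceCongr hst hadj ⟨a, ha⟩ = ⟨a, ha'⟩ := rfl

lemma ballIso_iff_of_good {G H : SimpleGraph V} {r : ℕ} {x : V} (hx : x ∉ Bad G H r)
    {W : Type*} (A : SimpleGraph W) (ρ : W) :
    ballIso G r x A ρ ↔ ballIso H r x A ρ := by
  have hset : ballVerts G r x = ballVerts H r x := ball_eq_of_good hx
  have hadj : ∀ a ∈ ballVerts G r x, ∀ b ∈ ballVerts G r x, (G.Adj a b ↔ H.Adj a b) :=
    fun a ha b hb => adj_iff_of_good hx ha hb
  set e0 := induceCongr hset hadj with he0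
  have hroot : e0 ⟨x, rootMemBall G r x⟩ = ⟨x, rootMemBall H r x⟩ :=
    induceCongr_apply hset hadj x _ _
  have hroot' : e0.symm ⟨x, rootMemBall H r x⟩ = ⟨x, rootMemBall G r x⟩ := by
    rw [← hroot]; exact e0.symm_apply_apply _
  constructor
  · rintro ⟨f, hf⟩
    refine ⟨f.comp e0.symm, ?_⟩
    show f (e0.symm ⟨x, rootMemBall H r x⟩) = ρ
    rw [hroot']; exact hf
  · rintro ⟨f, hf⟩
    refine ⟨f.comp e0, ?_⟩
    show f (e0 ⟨x, rootMemBall G r x⟩) = ρ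
    rw [hroot]; exact hf

lemma cover_card_le {G H : SimpleGraph V} {d : ℕ} (hd : 1 ≤ d) (hG : DegLe G d)
    (hH : DegLe H d) (r : ℕ) (e : Sym2 V) :
    ({x | (∀ w ∈ e, w ∈ ballVerts G r x) ∨ (∀ w ∈ e, w ∈ ballVerts H r x)} : Set V).ncard
      ≤ 4 * d ^ r := by
  induction e using Sym2.ind with
  | _ a b =>
    have hsub : ({x | (∀ w ∈ s(a,b), w ∈ ballVerts G r x) ∨
        (∀ w ∈ s(a,b), w ∈ ballVerts H r x)} : Set V)
        ⊆ ballVerts G r a ∪ ballVerts H r a := by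
      rintro x (h | h)
      · exact Or.inl (mem_ball_comm.mp (h a (Sym2.mem_mk_left a b)))
      · exact Or.inr (mem_ball_comm.mp (h a (Sym2.mem_mk_left a b)))
    calc _ ≤ (ballVerts G r a ∪ ballVerts H r a).ncard :=
          Set.ncard_le_ncard hsub (Set.toFinite _)
      _ ≤ (ballVerts G r a).ncard + (ballVerts H r a).ncard := Set.ncard_union_le _ _
      _ ≤ 2 * d ^ r + 2 * d ^ r := add_le_add (ball_card_le hd hG r a) (ball_card_le hd hH r a)
      _ = 4 * d ^ r := by ring

lemma bad_card_le {G H : SimpleGraph V} {d : ℕ} (hd : 1 ≤ d) (hG : DegLe G d)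
    (hH : DegLe H d) (r : ℕ) :
    (Bad G H r).ncard ≤ (symmDiff G.edgeSet H.edgeSet).ncard * (4 * d ^ r) := by
  classical
  have hfin : (symmDiff G.edgeSet H.edgeSet).Finite := Set.toFinite _
  have hBad : Bad G H r = ⋃ e ∈ hfin.toFinset,
      ({x | (∀ w ∈ e, w ∈ ballVerts G r x) ∨ (∀ w ∈ e, w ∈ ballVerts H r x)} : Set V) := by
    ext x
    simp [Bad, Set.mem_setOf_eq]
  rw [hBad]
  calc _ ≤ ∑ e ∈ hfin.toFinset,
        ({x | (∀ w ∈ e, w ∈ ballVerts G r x) ∨ (∀ w ∈ e, w ∈ ballVerts H r x)} : Set V).ncard :=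
        ncard_biUnion_le _ _
    _ ≤ ∑ _e ∈ hfin.toFinset, (4 * d ^ r) :=
        Finset.sum_le_sum fun e _ => cover_card_le hd hG hH r e
    _ = hfin.toFinset.card * (4 * d ^ r) := by simp [Finset.sum_const, mul_comm]
    _ = (symmDiff G.edgeSet H.edgeSet).ncard * (4 * d ^ r) := by
        rw [Set.ncard_eq_toFinset_card _ hfin]

end EditAux

/-- If two graphs on the same vertex set of size `n`, both with maximum
degree at most `d`, differ in at most `ε·n` edges, then for every rooted `(r,d)`-ball
`α` the neighborhood frequencies satisfy `|p_G(α) - p_H(α)| ≤ 4·d^r·ε`. -/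
theorem pfreq_close_of_edit_close {d : ℕ} (hd : 1 ≤ d)
    {V : Type} [Finite V] [Nonempty V] (G H : SimpleGraph V)
    (hG : DegLe G d) (hH : DegLe H d) (ε : ℝ) (hε : 0 ≤ ε)
    (hed : ((symmDiff G.edgeSet H.edgeSet).ncard : ℝ) ≤ ε * Nat.card V) :
    ∀ α : Ball d, |pfreq G α - pfreq H α| ≤ 4 * (d : ℝ) ^ α.rad * ε := by
  intro α
  set r := α.rad with hr
  set A := ({x : V | ballIso G r x α.graph α.root} : Set V) with hA
  set B := ({x : V | ballIso H r x α.graph α.root} : Set V) with hB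
  set K := EditAux.Bad G H r with hK
  have hiff : ∀ x, x ∉ K → (x ∈ A ↔ x ∈ B) := fun x hx =>
    EditAux.ballIso_iff_of_good hx α.graph α.root
  have hAB : A ⊆ B ∪ K := by
    intro x hx
    by_cases hxK : x ∈ K
    · exact Or.inr hxK
    · exact Or.inl ((hiff x hxK).mp hx)
  have hBA : B ⊆ A ∪ K := by
    intro x hx
    by_cases hxK : x ∈ K
    · exact Or.inr hxK
    · exact Or.inl ((hiff x hxK).mpr hx)
  have h1 : A.ncard ≤ B.ncard + K.ncard :=
    le_trans (Set.ncard_le_ncard hAB (Set.toFinite _)) (Set.ncard_union_le _ _)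
  have h2 : B.ncard ≤ A.ncard + K.ncard :=
    le_trans (Set.ncard_le_ncard hBA (Set.toFinite _)) (Set.ncard_union_le _ _)
  have hKbound : (K.ncard : ℝ) ≤ 4 * (d : ℝ) ^ r * (ε * Nat.card V) := by
    have hn : (K.ncard : ℝ) ≤ ((symmDiff G.edgeSet H.edgeSet).ncard : ℝ) * (4 * (d : ℝ) ^ r) := by
      have := EditAux.bad_card_le hd hG hH r (G := G) (H := H)
      calc (K.ncard : ℝ) ≤ (((symmDiff G.edgeSet H.edgeSet).ncard * (4 * d ^ r) : ℕ) : ℝ) := by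
            exact_mod_cast this
        _ = ((symmDiff G.edgeSet H.edgeSet).ncard : ℝ) * (4 * (d : ℝ) ^ r) := by
            push_cast; ring
    have hpow : (0 : ℝ) ≤ 4 * (d : ℝ) ^ r := by positivity
    calc (K.ncard : ℝ) ≤ ((symmDiff G.edgeSet H.edgeSet).ncard : ℝ) * (4 * (d : ℝ) ^ r) := hn
      _ ≤ (ε * Nat.card V) * (4 * (d : ℝ) ^ r) := mul_le_mul_of_nonneg_right hed hpow
      _ = 4 * (d : ℝ) ^ r * (ε * Nat.card V) := by ring
  have hnpos : (0 : ℝ) < (Nat.card V : ℝ) := by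
    exact_mod_cast Nat.card_pos
  have hdiff : pfreq G α - pfreq H α = ((A.ncard : ℝ) - B.ncard) / (Nat.card V : ℝ) := by
    rw [pfreq, pfreq, div_sub_div_same]
  rw [hdiff, abs_div, abs_of_pos hnpos, div_le_iff₀ hnpos]
  have habs : |(A.ncard : ℝ) - B.ncard| ≤ (K.ncard : ℝ) := by
    rw [abs_sub_le_iff]
    constructor
    · have : (A.ncard : ℝ) ≤ (B.ncard : ℝ) + K.ncard := by exact_mod_cast h1
      linarith
    · have : (B.ncard : ℝ) ≤ (A.ncard : ℝ) + K.ncard := by exact_mod_cast h2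
      linarith
  calc |(A.ncard : ℝ) - B.ncard| ≤ (K.ncard : ℝ) := habs
    _ ≤ 4 * (d : ℝ) ^ r * (ε * Nat.card V) := hKbound
    _ = 4 * (d : ℝ) ^ r * ε * Nat.card V := by ring
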